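/- Let N ≥ 2 be an integer, let c > 0 with p := c·ln N / N ≤ 1/2, let δ > 0, let ε₀ ∈ [0,1), set A_δ := (1−ε₀)(1−e^{−2cδ})/2 and a := c(1−ε₀)(1−cδ), and let ε be a real number with 0 < ε ≤ A_δ/2 and e·ε·N^{1−a} ≤ 1. Then Σ_{k=1}^N C(N,k) · ε^k · (ε₀ + (1−ε₀)·(1+(1−2p)^k)/2)^N ≤ (1 − A_δ/2)^N + δ·e·ε·N^{2−a} / ln N. -/

import Mathlib

lemma exp_neg_le_quad {y : ℝ} (hy : 0 ≤ y) : Real.exp (-y) ≤ 1 - y + y ^ 2 / 2 := by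
  have h := Real.quadratic_le_exp_of_nonneg hy
  have h2 : Real.exp (-y) * Real.exp y = 1 := by rw [← Real.exp_add]; simp
  have h3 : 0 < Real.exp y := Real.exp_pos y
  nlinarith [Real.exp_pos (-y), sq_nonneg y, sq_nonneg (y ^ 2)]

set_option maxHeartbeats 2000000 in
theorem stmt9 (N : ℕ) (hN : 2 ≤ N) (c : ℝ) (hc : 0 < c)
    (hp : c * Real.log N / N ≤ 1 / 2) (δ : ℝ) (hδ : 0 < δ)
    (ε₀ : ℝ) (hε₀0 : 0 ≤ ε₀) (hε₀1 : ε₀ < 1)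
    (ε : ℝ) (hε0 : 0 < ε)
    (hεA : ε ≤ ((1 - ε₀) * (1 - Real.exp (-(2 * c * δ))) / 2) / 2)
    (hεN : Real.exp 1 * ε * (N : ℝ) ^ ((1 : ℝ) - c * (1 - ε₀) * (1 - c * δ)) ≤ 1) :
    ∑ k ∈ Finset.Icc 1 N, (N.choose k : ℝ) * ε ^ k *
        (ε₀ + (1 - ε₀) * ((1 + (1 - 2 * (c * Real.log N / N)) ^ k) / 2)) ^ N
      ≤ (1 - ((1 - ε₀) * (1 - Real.exp (-(2 * c * δ))) / 2) / 2) ^ N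
        + δ * Real.exp 1 * ε *
            (N : ℝ) ^ ((2 : ℝ) - c * (1 - ε₀) * (1 - c * δ)) / Real.log N := by
  classical
  set L := Real.log N with hLdef
  set p := c * L / N with hpdef
  set a := c * (1 - ε₀) * (1 - c * δ) with hadef
  set A := (1 - ε₀) * (1 - Real.exp (-(2 * c * δ))) / 2 with hAdef
  set X := ε * (N : ℝ) ^ ((1 : ℝ) - a) with hXdef
  have hN1 : (1 : ℝ) < N := by exact_mod_cast Nat.one_lt_two.trans_le hN
  have hNpos : (0 : ℝ) < N := by linarith
  have hNne : (N : ℝ) ≠ 0 := ne_of_gt hNpos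
  have hL : 0 < L := Real.log_pos hN1
  have hLne : L ≠ 0 := ne_of_gt hL
  have hppos : 0 < p := by rw [hpdef]; positivity
  have hp0 : 0 ≤ p := hppos.le
  have hx0 : (0 : ℝ) ≤ 1 - 2 * p := by linarith
  have hx1 : 1 - 2 * p ≤ 1 := by linarith
  have he1 : (1 : ℝ) ≤ Real.exp 1 := by
    have := Real.add_one_le_exp (1 : ℝ); linarith
  have hXN : Real.exp 1 * X ≤ 1 := by
    have h : Real.exp 1 * X = Real.exp 1 * ε * (N : ℝ) ^ ((1 : ℝ) - a) := by
      rw [hXdef]; ring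
    rw [h]; exact hεN
  have hX0 : 0 ≤ X := by
    rw [hXdef]
    exact mul_nonneg hε0.le (Real.rpow_nonneg hNpos.le _)
  have hX1 : X ≤ 1 := by nlinarith
  clear_value L p a A X
  have ht0 : 0 < Real.exp (-(2 * c * δ)) := Real.exp_pos _
  have ht1 : Real.exp (-(2 * c * δ)) < 1 := by
    rw [Real.exp_lt_one_iff]; nlinarith
  have hA0 : 0 ≤ A := by rw [hAdef]; nlinarith
  have hA2 : A ≤ 1 / 2 := by rw [hAdef]; nlinarith
  -- q k bounds
  have hq0 : ∀ k : ℕ, 0 ≤ ε₀ + (1 - ε₀) * ((1 + (1 - 2 * p) ^ k) / 2) := by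
    intro k
    have := pow_nonneg hx0 k
    nlinarith
  -- exp bound on powers of (1-2p)
  have hxk : ∀ k : ℕ, (1 - 2 * p) ^ k ≤ Real.exp (-(2 * p * k)) := by
    intro k
    have h1 : 1 - 2 * p ≤ Real.exp (-(2 * p)) := by
      have := Real.add_one_le_exp (-(2 * p)); linarith
    calc (1 - 2 * p) ^ k ≤ (Real.exp (-(2 * p))) ^ k := pow_le_pow_left₀ hx0 h1 k
      _ = Real.exp (-(2 * p * k)) := by
          rw [← Real.exp_nat_mul]; congr 1; ring
  -- the small-k per-term bound
  have hsmall : ∀ k ∈ Finset.Icc 1 N, (k : ℝ) * p ≤ c * δ →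
      (N.choose k : ℝ) * ε ^ k * (ε₀ + (1 - ε₀) * ((1 + (1 - 2 * p) ^ k) / 2)) ^ N
        ≤ Real.exp 1 * X := by
    intro k hk hpk
    obtain ⟨hk1, hkN⟩ := Finset.mem_Icc.mp hk
    have hpk0 : 0 ≤ p * (k : ℝ) := mul_nonneg hp0 (Nat.cast_nonneg k)
    have hpk' : p * (k : ℝ) ≤ c * δ := by linarith [hpk]
    have hεk : 0 ≤ ε ^ k := pow_nonneg hε0.le k
    -- quadratic bound
    have hq : ε₀ + (1 - ε₀) * ((1 + (1 - 2 * p) ^ k) / 2)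
        ≤ 1 - (1 - ε₀) * (1 - c * δ) * (p * k) := by
      have h1 := hxk k
      have h2 := exp_neg_le_quad (show (0 : ℝ) ≤ 2 * p * k by linarith)
      have h3 : (1 - 2 * p) ^ k ≤ 1 - 2 * (p * (k : ℝ)) + 2 * (p * (k : ℝ)) ^ 2 := by
        linarith [h1.trans h2]
      have h4 : 0 ≤ 1 - (1 - 2 * p) ^ k - 2 * (p * (k : ℝ)) * (1 - c * δ) := by
        nlinarith [mul_nonneg hpk0 (sub_nonneg.mpr hpk')]
      nlinarith [mul_nonneg (by linarith : (0 : ℝ) ≤ 1 - ε₀) h4]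
    have hqe : ε₀ + (1 - ε₀) * ((1 + (1 - 2 * p) ^ k) / 2)
        ≤ Real.exp (-((1 - ε₀) * (1 - c * δ) * (p * k))) := by
      have := Real.add_one_le_exp (-((1 - ε₀) * (1 - c * δ) * (p * k)))
      linarith
    have hqN : (ε₀ + (1 - ε₀) * ((1 + (1 - 2 * p) ^ k) / 2)) ^ N
        ≤ Real.exp (-(a * k * L)) := by
      have hpN : p * N = c * L := by rw [hpdef]; field_simp
      calc (ε₀ + (1 - ε₀) * ((1 + (1 - 2 * p) ^ k) / 2)) ^ N
          ≤ (Real.exp (-((1 - ε₀) * (1 - c * δ) * (p * k)))) ^ N :=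
            pow_le_pow_left₀ (hq0 k) hqe N
        _ = Real.exp (-((1 - ε₀) * (1 - c * δ) * (p * k)) * N) := by
            rw [← Real.exp_nat_mul]; congr 1; ring
        _ = Real.exp (-(a * k * L)) := by
            congr 1
            rw [hadef]
            linear_combination (-((1 - ε₀) * (1 - c * δ) * (k : ℝ))) * hpN
    have hchoose : (N.choose k : ℝ) ≤ (N : ℝ) ^ k := by
      exact_mod_cast Nat.choose_le_pow N k
    have hNexp : (N : ℝ) ^ k = Real.exp ((k : ℝ) * L) := by
      rw [Real.exp_nat_mul, hLdef, Real.exp_log hNpos]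
    have hXk : (N : ℝ) ^ k * ε ^ k * Real.exp (-(a * k * L)) = X ^ k := by
      have hexp : Real.exp ((k : ℝ) * L) * Real.exp (-(a * k * L))
          = Real.exp ((k : ℝ) * (L * (1 - a))) := by
        rw [← Real.exp_add]; congr 1; ring
      rw [hXdef, mul_pow, Real.rpow_def_of_pos hNpos, ← hLdef, ← Real.exp_nat_mul,
        hNexp]
      linear_combination (ε ^ k) * hexp
    calc (N.choose k : ℝ) * ε ^ k * (ε₀ + (1 - ε₀) * ((1 + (1 - 2 * p) ^ k) / 2)) ^ N
        ≤ (N : ℝ) ^ k * ε ^ k * Real.exp (-(a * k * L)) := by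
          apply mul_le_mul
          · exact mul_le_mul_of_nonneg_right hchoose hεk
          · exact hqN
          · exact pow_nonneg (hq0 k) N
          · exact mul_nonneg (pow_nonneg hNpos.le k) hεk
      _ = X ^ k := hXk
      _ ≤ X ^ 1 := pow_le_pow_of_le_one hX0 hX1 hk1
      _ = X := pow_one X
      _ ≤ Real.exp 1 * X := by nlinarith
  -- the large-k per-term bound
  have hlarge : ∀ k ∈ Finset.Icc 1 N, ¬ ((k : ℝ) * p ≤ c * δ) →
      (N.choose k : ℝ) * ε ^ k * (ε₀ + (1 - ε₀) * ((1 + (1 - 2 * p) ^ k) / 2)) ^ N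
        ≤ (N.choose k : ℝ) * ε ^ k * (1 - A) ^ N := by
    intro k hk hpk
    push_neg at hpk
    have h1 := hxk k
    have h2 : Real.exp (-(2 * p * k)) ≤ Real.exp (-(2 * c * δ)) := by
      apply Real.exp_le_exp.mpr; nlinarith
    have hq : ε₀ + (1 - ε₀) * ((1 + (1 - 2 * p) ^ k) / 2) ≤ 1 - A := by
      rw [hAdef]
      nlinarith [mul_nonneg (by linarith : (0 : ℝ) ≤ 1 - ε₀)
        (by linarith : (0 : ℝ) ≤ Real.exp (-(2 * c * δ)) - (1 - 2 * p) ^ k)]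
    have hmono := pow_le_pow_left₀ (hq0 k) hq N
    have hc0 : (0 : ℝ) ≤ (N.choose k : ℝ) * ε ^ k :=
      mul_nonneg (Nat.cast_nonneg _) (pow_nonneg hε0.le k)
    exact mul_le_mul_of_nonneg_left hmono hc0
  -- split the sum
  rw [← Finset.sum_filter_add_sum_filter_not (Finset.Icc 1 N)
    (fun k => (k : ℝ) * p ≤ c * δ)]
  have h1A : (0 : ℝ) ≤ 1 - A := by linarith
  have hbig : ∑ k ∈ (Finset.Icc 1 N).filter (fun k : ℕ => ¬ ((k : ℝ) * p ≤ c * δ)),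
      (N.choose k : ℝ) * ε ^ k * (ε₀ + (1 - ε₀) * ((1 + (1 - 2 * p) ^ k) / 2)) ^ N
      ≤ (1 - A / 2) ^ N := by
    calc ∑ k ∈ (Finset.Icc 1 N).filter (fun k : ℕ => ¬ ((k : ℝ) * p ≤ c * δ)),
        (N.choose k : ℝ) * ε ^ k * (ε₀ + (1 - ε₀) * ((1 + (1 - 2 * p) ^ k) / 2)) ^ N
        ≤ ∑ k ∈ (Finset.Icc 1 N).filter (fun k : ℕ => ¬ ((k : ℝ) * p ≤ c * δ)),
          (N.choose k : ℝ) * ε ^ k * (1 - A) ^ N := by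
          apply Finset.sum_le_sum
          intro k hk
          obtain ⟨hk1, hk2⟩ := Finset.mem_filter.mp hk
          exact hlarge k hk1 hk2
      _ ≤ ∑ k ∈ Finset.range (N + 1), (N.choose k : ℝ) * ε ^ k * (1 - A) ^ N := by
          apply Finset.sum_le_sum_of_subset_of_nonneg
          · intro k hk
            obtain ⟨hk1, _⟩ := Finset.mem_filter.mp hk
            obtain ⟨_, h2'⟩ := Finset.mem_Icc.mp hk1
            exact Finset.mem_range.mpr (Nat.lt_succ_of_le h2')
          · intro k _ _
            exact mul_nonneg (mul_nonneg (Nat.cast_nonneg _) (pow_nonneg hε0.le k))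
              (pow_nonneg h1A N)
      _ = (1 + ε) ^ N * (1 - A) ^ N := by
          rw [← Finset.sum_mul]
          congr 1
          have hap := add_pow ε 1 N
          simp only [one_pow, mul_one] at hap
          rw [add_comm (1 : ℝ) ε, hap]
          apply Finset.sum_congr rfl
          intro k _; ring
      _ = ((1 + ε) * (1 - A)) ^ N := by rw [← mul_pow]
      _ ≤ (1 - A / 2) ^ N := by
          apply pow_le_pow_left₀
          · nlinarith
          · nlinarith
  have hsmallsum : ∑ k ∈ (Finset.Icc 1 N).filter (fun k : ℕ => (k : ℝ) * p ≤ c * δ),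
      (N.choose k : ℝ) * ε ^ k * (ε₀ + (1 - ε₀) * ((1 + (1 - 2 * p) ^ k) / 2)) ^ N
      ≤ δ * Real.exp 1 * ε * (N : ℝ) ^ ((2 : ℝ) - a) / L := by
    set T := (Finset.Icc 1 N).filter (fun k : ℕ => (k : ℝ) * p ≤ c * δ) with hTdef
    have hcard : (T.card : ℝ) ≤ δ * N / L := by
      have hKnn : (0 : ℝ) ≤ δ * N / L := le_of_lt (div_pos (mul_pos hδ hNpos) hL)
      have hsub : T ⊆ Finset.Icc 1 (Nat.floor (δ * N / L)) := by
        intro k hk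
        obtain ⟨hk1, hk2⟩ := Finset.mem_filter.mp hk
        obtain ⟨h1', _⟩ := Finset.mem_Icc.mp hk1
        refine Finset.mem_Icc.mpr ⟨h1', Nat.le_floor ?_⟩
        have hkp : (k : ℝ) ≤ c * δ / p := by
          rw [le_div_iff₀ hppos]; linarith [hk2]
        have heq : c * δ / p = δ * N / L := by
          rw [hpdef]; field_simp
        linarith [hkp, heq.le, heq.ge]
      calc (T.card : ℝ) ≤ ((Finset.Icc 1 (Nat.floor (δ * N / L))).card : ℝ) := by
            exact_mod_cast Finset.card_le_card hsub
        _ = (Nat.floor (δ * N / L) : ℝ) := by rw [Nat.card_Icc]; simp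
        _ ≤ δ * N / L := Nat.floor_le hKnn
    calc ∑ k ∈ T, (N.choose k : ℝ) * ε ^ k *
          (ε₀ + (1 - ε₀) * ((1 + (1 - 2 * p) ^ k) / 2)) ^ N
        ≤ ∑ k ∈ T, Real.exp 1 * X := by
          apply Finset.sum_le_sum
          intro k hk
          obtain ⟨hk1, hk2⟩ := Finset.mem_filter.mp hk
          exact hsmall k hk1 hk2
      _ = (T.card : ℝ) * (Real.exp 1 * X) := by
          rw [Finset.sum_const, nsmul_eq_mul]
      _ ≤ (δ * N / L) * (Real.exp 1 * X) := by
          exact mul_le_mul_of_nonneg_right hcard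
            (mul_nonneg (Real.exp_pos 1).le hX0)
      _ = δ * Real.exp 1 * ε * (N : ℝ) ^ ((2 : ℝ) - a) / L := by
          rw [hXdef, show (2 : ℝ) - a = 1 + (1 - a) by ring,
            Real.rpow_add hNpos, Real.rpow_one]
          field_simp
  linarith [hbig, hsmallsum]
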